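/- Let T be a finite tree. Then the edges of T can be colored with 3 colors {0,1,2} so that (i) the coloring is conflict-free as an edge coloring (for every edge e there is a color appearing on exactly one edge among e and the edges sharing a vertex with e), and (ii) for every vertex v of positive degree there is a color c_v such that v is incident to exactly one edge of color c_v. -/

import Mathlib

set_option linter.unusedSectionVars false

open SimpleGraph Fin.NatCast

namespace TreeCF

variable {V : Type*} {T : SimpleGraph V} [DecidableEq V]

lemma isPath_concat {u v w : V} {p : T.Walk u v} (hp : p.IsPath) (h : T.Adj v w)
    (hw : w ∉ p.support) : (p.concat h).IsPath := by
  rw [SimpleGraph.Walk.isPath_def, SimpleGraph.Walk.support_concat,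
    List.nodup_append]
  refine ⟨hp.support_nodup, List.nodup_singleton _, ?_⟩
  intro a ha b hb hab
  simp only [List.mem_singleton] at hb
  exact hw (hb ▸ hab ▸ ha)

lemma path_eq (hT : T.IsTree) {u v : V} {p q : T.Walk u v} (hp : p.IsPath) (hq : q.IsPath) :
    p = q :=
  (hT.existsUnique_path u v).unique hp hq

lemma dist_le_of_mem_support {r u x : V} {p : T.Walk r u} (hx : x ∈ p.support) :
    T.dist r x ≤ p.length :=
  le_trans (SimpleGraph.dist_le (p.takeUntil x hx)) (p.length_takeUntil_le hx)

lemma dist_lt_of_mem_support {r u x : V} {p : T.Walk r u} (hx : x ∈ p.support) (hxu : x ≠ u) :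
    T.dist r x < p.length := by
  have hspec := p.take_spec hx
  have hlen : (p.takeUntil x hx).length + (p.dropUntil x hx).length = p.length := by
    conv_rhs => rw [← hspec]
    rw [SimpleGraph.Walk.length_append]
  have hd0 : (p.dropUntil x hx).length ≠ 0 := fun h0 =>
    hxu (SimpleGraph.Walk.eq_of_length_eq_zero h0)
  have := SimpleGraph.dist_le (p.takeUntil x hx)
  omega

/-- Lemma A, one-sided. -/
lemma adj_dist_of_le (hT : T.IsTree) (r : V) {u v : V} (h : T.Adj u v)
    (hle : T.dist r u ≤ T.dist r v) : T.dist r v = T.dist r u + 1 := by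
  obtain ⟨p, hp, hl⟩ := hT.isConnected.exists_path_of_dist r u
  have hv : v ∉ p.support := by
    intro hv
    have := dist_lt_of_mem_support hv h.ne'
    omega
  have hq : (p.concat h).IsPath := isPath_concat hp h hv
  obtain ⟨q', hq', hl'⟩ := hT.isConnected.exists_path_of_dist r v
  have := path_eq hT hq hq'
  have hlen : (p.concat h).length = q'.length := by rw [this]
  rw [SimpleGraph.Walk.length_concat] at hlen
  omega

lemma adj_dist (hT : T.IsTree) (r : V) {u v : V} (h : T.Adj u v) :
    T.dist r v = T.dist r u + 1 ∨ T.dist r u = T.dist r v + 1 := by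
  rcases le_total (T.dist r u) (T.dist r v) with hle | hle
  · exact Or.inl (adj_dist_of_le hT r h hle)
  · exact Or.inr (adj_dist_of_le hT r h.symm hle)

/-- existence of a parent -/
lemma exists_parent (hT : T.IsTree) (r : V) {u : V} (h : T.dist r u ≠ 0) :
    ∃ w, T.Adj w u ∧ T.dist r w + 1 = T.dist r u := by
  obtain ⟨p, hp, hl⟩ := hT.isConnected.exists_path_of_dist r u
  cases hpr : p.reverse with
  | nil =>
    exfalso
    have : p.reverse.length = 0 := by rw [hpr]; rfl
    rw [SimpleGraph.Walk.length_reverse] at this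
    omega
  | cons hadj q =>
    rename_i w
    have hqlen : q.length + 1 = p.length := by
      have : p.reverse.length = p.length := SimpleGraph.Walk.length_reverse p
      rw [hpr] at this
      simpa using this
    have hdw : T.dist r w ≤ q.length := by
      have := SimpleGraph.dist_le q.reverse
      rwa [SimpleGraph.Walk.length_reverse] at this
    rcases adj_dist hT r hadj.symm with h1 | h1
    · exact ⟨w, hadj.symm, by omega⟩
    · omega

/-- Lemma B: uniqueness of a parent. -/
lemma parent_unique (hT : T.IsTree) (r : V) {u w w' : V}
    (hw : T.Adj w u) (hw' : T.Adj w' u)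
    (hd : T.dist r w + 1 = T.dist r u) (hd' : T.dist r w' + 1 = T.dist r u) : w = w' := by
  obtain ⟨p, hp, hl⟩ := hT.isConnected.exists_path_of_dist r w
  obtain ⟨q, hq, hl'⟩ := hT.isConnected.exists_path_of_dist r w'
  have hup : u ∉ p.support := fun hm => by
    have := dist_le_of_mem_support hm; omega
  have huq : u ∉ q.support := fun hm => by
    have := dist_le_of_mem_support hm; omega
  have hpc : (p.concat hw).IsPath := isPath_concat hp hw hup
  have hqc : (q.concat hw').IsPath := isPath_concat hq hw' huq
  have heq := path_eq hT hpc hqc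
  have := congrArg (fun z => (SimpleGraph.Walk.reverse z).getVert 1) heq
  simpa [SimpleGraph.Walk.reverse_concat, SimpleGraph.Walk.getVert_cons_succ, SimpleGraph.Walk.getVert_zero] using this

end TreeCF

namespace TreeCF2
open TreeCF

variable {V : Type*} {T : SimpleGraph V} [DecidableEq V]

lemma exists_leaf [Fintype V] (hT : T.IsTree) {a b : V} (hab : T.Adj a b) :
    ∃ r u₀, T.Adj r u₀ ∧ ∀ x, T.Adj r x → x = u₀ := by
  obtain ⟨r, -, hr⟩ := Finset.exists_max_image Finset.univ (T.dist a) ⟨a, Finset.mem_univ a⟩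
  have hb : T.dist a b = 1 := SimpleGraph.dist_eq_one_iff_adj.mpr hab
  have hra : T.dist a r ≠ 0 := by
    have := hr b (Finset.mem_univ b); omega
  obtain ⟨w, hw, hwd⟩ := exists_parent hT a hra
  refine ⟨r, w, hw.symm, ?_⟩
  intro x hx
  rcases adj_dist hT a hx with h1 | h1
  · have := hr x (Finset.mem_univ x); omega
  · exact parent_unique hT a hx.symm hw (by omega) hwd

lemma fin3_add_ne (n k : ℕ) (h : k % 3 ≠ 0) : ((n + k : ℕ) : Fin 3) ≠ (n : Fin 3) := by
  intro h'
  have := congrArg Fin.val h'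
  simp only [Fin.val_natCast] at this
  omega

noncomputable def col (T : SimpleGraph V) (r : V) : T.edgeSet → Fin 3 := fun e =>
  Sym2.lift ⟨fun a b => ((min (T.dist r a) (T.dist r b) : ℕ) : Fin 3),
    fun a b => by simp only; rw [min_comm]⟩ e.1

lemma col_val (r : V) (e : T.edgeSet) {x y : V} (hxy : (e : Sym2 V) = s(x, y))
    (hd : T.dist r y = T.dist r x + 1) : col T r e = ((T.dist r x : ℕ) : Fin 3) := by
  obtain ⟨val, hv⟩ := e
  simp only at hxy
  cases hxy
  simp only [col, Sym2.lift_mk]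
  rw [hd, min_eq_left (Nat.le_succ _)]

lemma orient (hT : T.IsTree) (r : V) (e : T.edgeSet) :
    ∃ x y, (e : Sym2 V) = s(x, y) ∧ T.Adj x y ∧ T.dist r y = T.dist r x + 1 := by
  obtain ⟨e, he⟩ := e
  induction e using Sym2.ind with
  | _ x y =>
    rw [SimpleGraph.mem_edgeSet] at he
    rcases adj_dist hT r he with h | h
    · exact ⟨x, y, rfl, he, h⟩
    · exact ⟨y, x, Sym2.eq_swap, he.symm, h⟩

end TreeCF2


open TreeCF TreeCF2 Fin.NatCast

/-- Every finite tree has a conflict-free edge coloring with 3 colors such that moreover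
every vertex of positive degree is incident to exactly one edge of some color. -/
theorem tree_conflict_free_edge_coloring {V : Type*} [Fintype V]
    (T : SimpleGraph V) (hT : T.IsTree) :
    ∃ f : T.edgeSet → Fin 3,
      (∀ e : T.edgeSet, ∃ c : Fin 3, ∃! e' : T.edgeSet,
        (∃ v : V, v ∈ (e : Sym2 V) ∧ v ∈ (e' : Sym2 V)) ∧ f e' = c) ∧
      (∀ v : V, (∃ u : V, T.Adj v u) →
        ∃ c : Fin 3, ∃! e : T.edgeSet, v ∈ (e : Sym2 V) ∧ f e = c) := by
  classical
  by_cases hne : Nonempty T.edgeSet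
  swap
  · rw [not_nonempty_iff] at hne
    refine ⟨fun _ => 0, fun e => hne.elim e, fun v hv => ?_⟩
    obtain ⟨u, hu⟩ := hv
    exact (hne.elim ⟨s(v, u), hu⟩)
  obtain ⟨⟨e0, he0⟩⟩ := hne
  obtain ⟨a, b, hab⟩ : ∃ a b, T.Adj a b := by
    induction e0 using Sym2.ind with
    | _ a b => exact ⟨a, b, (T.mem_edgeSet).mp he0⟩
  obtain ⟨r, u0, hru0, hleaf⟩ := exists_leaf hT hab
  have hdrr : T.dist r r = 0 := SimpleGraph.dist_self
  have hdu0 : T.dist r u0 = 1 := SimpleGraph.dist_eq_one_iff_adj.mpr hru0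
  have hdz : ∀ v : V, T.dist r v = 0 ↔ r = v := fun v =>
    hT.isConnected.dist_eq_zero_iff
  refine ⟨col T r, ?_, ?_⟩
  · -- conflict-free
    intro e
    obtain ⟨x, y, hxy, hadj, hdy⟩ := orient hT r e
    have hfe : col T r e = ((T.dist r x : ℕ) : Fin 3) := col_val r e hxy hdy
    by_cases hx0 : T.dist r x = 0
    · -- x = r : the edge e itself is the unique one of color 0
      have hxr : r = x := (hdz x).mp hx0
      refine ⟨0, e, ⟨⟨x, ?_, ?_⟩, by rw [hfe, hx0]; rfl⟩, ?_⟩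
      · rw [hxy]; exact Sym2.mem_mk_left x y
      · rw [hxy]; exact Sym2.mem_mk_left x y
      · rintro e' ⟨⟨z, hz, hz'⟩, hf'⟩
        obtain ⟨x', y', hxy', hadj', hdy'⟩ := orient hT r e'
        have hfe' : col T r e' = ((T.dist r x' : ℕ) : Fin 3) := col_val r e' hxy' hdy'
        rw [hfe'] at hf'
        rw [hxy, Sym2.mem_iff] at hz
        rw [hxy', Sym2.mem_iff] at hz'
        have hyu0 : y = u0 := hleaf y (hxr ▸ hadj)
        rcases hz with hz | hz
        · rcases hz' with hz' | hz'
          · -- z = x = x'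
            have hxx' : x = x' := hz.symm.trans hz'
            have hy'u0 : y' = u0 := hleaf y' (by rw [hxr, hxx']; exact hadj')
            apply Subtype.ext
            rw [hxy, hxy', ← hxx', hy'u0, hyu0]
          · -- z = x = y' : impossible, y' has positive distance
            exfalso
            have hxy'' : x = y' := hz.symm.trans hz'
            have : T.dist r y' = 0 := by rw [← hxy'']; exact hx0
            omega
        · rcases hz' with hz' | hz'
          · -- z = y = x' : color of e' is 1 ≠ 0
            exfalso
            have hyx' : y = x' := hz.symm.trans hz'
            have hx'1 : T.dist r x' = 1 := by rw [← hyx', hdy, hx0]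
            rw [hx'1] at hf'
            exact absurd hf' (by decide)
          · -- z = y = y'
            have hyy' : y = y' := hz.symm.trans hz'
            have hy'1 : T.dist r y' = 1 := by rw [← hyy', hdy, hx0]
            have hx'0 : T.dist r x' = 0 := by omega
            have hx'r : r = x' := (hdz x').mp hx'0
            apply Subtype.ext
            rw [hxy, hxy', ← hx'r, ← hyy', hxr]
    · -- x ≠ r : the parent edge of x is the unique one of its color
      obtain ⟨w, hwx, hdw⟩ := exists_parent hT r hx0
      have hdx : T.dist r x = T.dist r w + 1 := hdw.symm
      refine ⟨((T.dist r w : ℕ) : Fin 3), ⟨s(w, x), (T.mem_edgeSet).mpr hwx⟩,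
        ⟨⟨x, ?_, ?_⟩, col_val r _ rfl hdx⟩, ?_⟩
      · rw [hxy]; exact Sym2.mem_mk_left x y
      · exact Sym2.mem_mk_right w x
      · rintro e' ⟨⟨z, hz, hz'⟩, hf'⟩
        obtain ⟨x', y', hxy', hadj', hdy'⟩ := orient hT r e'
        have hfe' : col T r e' = ((T.dist r x' : ℕ) : Fin 3) := col_val r e' hxy' hdy'
        rw [hfe'] at hf'
        rw [hxy, Sym2.mem_iff] at hz
        rw [hxy', Sym2.mem_iff] at hz'
        rcases hz with hz | hz
        · rcases hz' with hz' | hz'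
          · -- z = x = x'
            exfalso
            have hxx' : x = x' := hz.symm.trans hz'
            have : T.dist r x' = T.dist r w + 1 := by rw [← hxx', hdx]
            rw [this] at hf'
            exact fin3_add_ne _ 1 (by norm_num) hf'
          · -- z = x = y' : e' is the parent edge of x
            have hxy'' : x = y' := hz.symm.trans hz'
            have hx'w : x' = w :=
              parent_unique hT r (hxy'' ▸ hadj') hwx (by rw [hxy'']; omega) hdw
            apply Subtype.ext
            rw [hxy', hx'w, ← hxy'']
        · rcases hz' with hz' | hz'
          · -- z = y = x'
            exfalso
            have hyx' : y = x' := hz.symm.trans hz'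
            have : T.dist r x' = T.dist r w + 2 := by rw [← hyx', hdy, hdx]
            rw [this] at hf'
            exact fin3_add_ne _ 2 (by norm_num) hf'
          · -- z = y = y'
            exfalso
            have hyy' : y = y' := hz.symm.trans hz'
            have hx'x : x' = x :=
              parent_unique hT r (hyy' ▸ hadj') hadj (by rw [hyy']; omega) (by omega)
            rw [hx'x, hdx] at hf'
            exact fin3_add_ne _ 1 (by norm_num) hf'
  · -- vertex condition
    intro v hv
    by_cases hvr : v = r
    · subst hvr
      refine ⟨0, ⟨s(v, u0), (T.mem_edgeSet).mpr hru0⟩,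
        ⟨Sym2.mem_mk_left v u0, ?_⟩, ?_⟩
      · rw [col_val (T := T) v ⟨s(v, u0), (T.mem_edgeSet).mpr hru0⟩ rfl
          (by rw [hdu0, hdrr]), hdrr]
        rfl
      · rintro e' ⟨hz, hf'⟩
        obtain ⟨x', y', hxy', hadj', hdy'⟩ := orient hT v e'
        rw [hxy', Sym2.mem_iff] at hz
        rcases hz with hz | hz
        · have : y' = u0 := hleaf y' (hz ▸ hadj')
          apply Subtype.ext
          rw [hxy', ← hz, this]
        · exfalso
          have : T.dist v y' = 0 := (hdz y').mpr hz
          omega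
    · have hv0 : T.dist r v ≠ 0 := fun h => hvr ((hdz v).mp h).symm
      obtain ⟨w, hwv, hdw⟩ := exists_parent hT r hv0
      refine ⟨((T.dist r w : ℕ) : Fin 3), ⟨s(w, v), (T.mem_edgeSet).mpr hwv⟩,
        ⟨Sym2.mem_mk_right w v, col_val r _ rfl (by omega)⟩, ?_⟩
      rintro e' ⟨hz, hf'⟩
      obtain ⟨x', y', hxy', hadj', hdy'⟩ := orient hT r e'
      have hfe' : col T r e' = ((T.dist r x' : ℕ) : Fin 3) := col_val r e' hxy' hdy'
      rw [hfe'] at hf'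
      rw [hxy', Sym2.mem_iff] at hz
      rcases hz with hz | hz
      · exfalso
        have : T.dist r x' = T.dist r w + 1 := by rw [← hz]; omega
        rw [this] at hf'
        exact fin3_add_ne _ 1 (by norm_num) hf'
      · have : x' = w := parent_unique hT r (hz ▸ hadj') hwv (by rw [hz]; omega) hdw
        apply Subtype.ext
        rw [hxy', this, ← hz]
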